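/- arXiv:1302.1167 — 3 statements merged into one kernel-verified Lean document; each statement's English description precedes it below -/
import Mathlib

section
/- For every natural number n ≥ 1 and every x with 0 ≤ x ≤ π/(2(n+1)), we have n·sin((n+1)·x) ≤ (n+1)·sin(n·x). -/
theorem stmt_4 (n : ℕ) (hn : 1 ≤ n) (x : ℝ) (hx0 : 0 ≤ x)
    (hx : x ≤ Real.pi / (2 * (n + 1))) :
    n * Real.sin ((n + 1) * x) ≤ (n + 1) * Real.sin (n * x) := by
  have hn1 : (0:ℝ) < (n:ℝ) + 1 := by positivity
  have ha : (0:ℝ) ≤ (n + 1) * x := by positivity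
  have ha' : ((n:ℝ) + 1) * x ≤ Real.pi := by
    have := mul_le_mul_of_nonneg_left hx hn1.le
    calc ((n:ℝ) + 1) * x ≤ ((n:ℝ) + 1) * (Real.pi / (2 * (n + 1))) := this
      _ = Real.pi / 2 := by field_simp
      _ ≤ Real.pi := by linarith [Real.pi_pos]
  have key := strictConcaveOn_sin_Icc.concaveOn.2
    (Set.mem_Icc.2 ⟨le_refl (0:ℝ), Real.pi_pos.le⟩)
    (Set.mem_Icc.2 ⟨ha, ha'⟩)
    (show (0:ℝ) ≤ 1 / ((n:ℝ) + 1) by positivity)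
    (show (0:ℝ) ≤ (n:ℝ) / ((n:ℝ) + 1) by positivity)
    (show 1 / ((n:ℝ) + 1) + (n:ℝ) / ((n:ℝ) + 1) = 1 by field_simp; ring)
  simp only [smul_eq_mul, mul_zero, Real.sin_zero, zero_add] at key
  have heq : (n:ℝ) / ((n:ℝ) + 1) * (((n:ℝ) + 1) * x) = (n:ℝ) * x := by
    field_simp
  rw [heq] at key
  have := mul_le_mul_of_nonneg_left key hn1.le
  calc (n:ℝ) * Real.sin (((n:ℝ) + 1) * x)
      = ((n:ℝ) + 1) * ((n:ℝ) / ((n:ℝ) + 1) * Real.sin (((n:ℝ) + 1) * x)) := by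
        field_simp
    _ ≤ ((n:ℝ) + 1) * Real.sin ((n:ℝ) * x) := this
end

section
/- For every natural number n ≥ 1 and every x with 0 ≤ x < π/(2(n+1)), we have n·tan((n+1)·x) ≥ (n+1)·tan(n·x). -/
theorem stmt_5 (n : ℕ) (hn : 1 ≤ n) (x : ℝ) (hx0 : 0 ≤ x)
    (hx : x < Real.pi / (2 * (n + 1))) :
    (n + 1) * Real.tan (n * x) ≤ n * Real.tan ((n + 1) * x) := by
  have hn' : (1:ℝ) ≤ n := by exact_mod_cast hn
  set c : ℝ := (n : ℝ) + 1 with hc_def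
  clear_value c
  have hc : (0:ℝ) < c := by rw [hc_def]; positivity
  have hcx : c * x < Real.pi / 2 := by
    have h2c : (0:ℝ) < 2 * c := by positivity
    have := (lt_div_iff₀ h2c).mp hx
    nlinarith
  -- on [0, x], arguments lie in (-π/2, π/2)
  have hcos : ∀ t ∈ Set.Icc (0:ℝ) x, ∀ a : ℝ, 0 ≤ a → a ≤ c →
      0 < Real.cos (a * t) := by
    intro t ht a ha hac
    apply Real.cos_pos_of_mem_Ioo
    constructor
    · have : (0:ℝ) ≤ a * t := mul_nonneg ha ht.1
      linarith [Real.pi_pos]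
    · have h1 : a * t ≤ c * t := mul_le_mul_of_nonneg_right hac ht.1
      have h2 : c * t ≤ c * x := mul_le_mul_of_nonneg_left ht.2 hc.le
      linarith
  set f : ℝ → ℝ := fun t => (n:ℝ) * Real.tan (c * t) - c * Real.tan ((n:ℝ) * t) with hf
  have key : ∀ t ∈ Set.Icc (0:ℝ) x,
      HasDerivAt f ((n:ℝ) * c * (1 / Real.cos (c*t) ^ 2) - c * (n:ℝ) * (1 / Real.cos ((n:ℝ)*t) ^ 2)) t := by
    intro t ht
    have h1 : Real.cos (c * t) ≠ 0 := (hcos t ht c hc.le le_rfl).ne'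
    have h2 : Real.cos ((n:ℝ) * t) ≠ 0 :=
      (hcos t ht n (by positivity) (by rw [hc_def]; simp)).ne'
    have i1 : HasDerivAt (fun t : ℝ => c * t) c t := by
      simpa using (hasDerivAt_id t).const_mul c
    have i2 : HasDerivAt (fun t : ℝ => (n:ℝ) * t) (n:ℝ) t := by
      simpa using (hasDerivAt_id t).const_mul (n:ℝ)
    have d1 : HasDerivAt (fun t => Real.tan (c * t)) ((1 / Real.cos (c*t) ^ 2) * c) t :=
      (Real.hasDerivAt_tan h1).comp t i1
    have d2 : HasDerivAt (fun t => Real.tan ((n:ℝ) * t)) ((1 / Real.cos ((n:ℝ)*t) ^ 2) * (n:ℝ)) t :=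
      (Real.hasDerivAt_tan h2).comp t i2
    have := (d1.const_mul (n:ℝ)).sub (d2.const_mul c)
    refine this.congr_deriv ?_
    ring
  have hmono : MonotoneOn f (Set.Icc 0 x) := by
    apply monotoneOn_of_deriv_nonneg (convex_Icc 0 x)
    · exact fun t ht => (key t ht).continuousAt.continuousWithinAt
    · intro t ht
      rw [interior_Icc] at ht
      exact (key t (Set.mem_Icc_of_Ioo ht)).differentiableAt.differentiableWithinAt
    · intro t ht
      rw [interior_Icc] at ht
      have ht' : t ∈ Set.Icc (0:ℝ) x := Set.mem_Icc_of_Ioo ht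
      rw [(key t ht').deriv]
      have hc1 : 0 < Real.cos (c * t) := hcos t ht' c hc.le le_rfl
      have hc2 : 0 < Real.cos ((n:ℝ) * t) := hcos t ht' n (by positivity) (by rw [hc_def]; simp)
      have hle : Real.cos (c * t) ≤ Real.cos ((n:ℝ) * t) := by
        apply Real.cos_le_cos_of_nonneg_of_le_pi
        · exact mul_nonneg (by positivity) ht'.1
        · have h2 : c * t ≤ c * x := mul_le_mul_of_nonneg_left ht'.2 hc.le
          linarith [Real.pi_pos]
        · exact mul_le_mul_of_nonneg_right (by rw [hc_def]; simp) ht'.1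
      have hsq : Real.cos (c*t) ^ 2 ≤ Real.cos ((n:ℝ)*t) ^ 2 := by nlinarith
      have : 1 / Real.cos ((n:ℝ)*t) ^ 2 ≤ 1 / Real.cos (c*t) ^ 2 :=
        one_div_le_one_div_of_le (by positivity) hsq
      have hnc : (0:ℝ) ≤ (n:ℝ) * c := by positivity
      nlinarith
  have h0 : f 0 ≤ f x := hmono (Set.left_mem_Icc.mpr hx0) (Set.right_mem_Icc.mpr hx0) hx0
  have hf0 : f 0 = 0 := by simp [hf]
  have := h0
  rw [hf0] at this
  simp only [hf] at this
  linarith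
end

section
/- The function x ↦ tan(x)/x is monotone (increasing) on the interval (0, π/2). -/
open Real Set

lemma cos_pos_of_mem (x : ℝ) (hx : x ∈ Set.Ioo 0 (Real.pi / 2)) : 0 < Real.cos x :=
  Real.cos_pos_of_mem_Ioo ⟨by linarith [hx.1, Real.pi_pos], hx.2⟩

lemma hderiv (x : ℝ) (hx : x ∈ Set.Ioo 0 (Real.pi / 2)) :
    HasDerivAt (fun x : ℝ => Real.tan x / x)
      ((1 / Real.cos x ^ 2 * x - Real.tan x * 1) / x ^ 2) x := by
  exact (Real.hasDerivAt_tan (ne_of_gt (cos_pos_of_mem x hx))).div (hasDerivAt_id x)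
    (ne_of_gt hx.1)

theorem stmt_9 : MonotoneOn (fun x : ℝ => Real.tan x / x) (Set.Ioo 0 (Real.pi / 2)) := by
  have hint : interior (Set.Ioo 0 (Real.pi / 2)) = Set.Ioo 0 (Real.pi / 2) := interior_Ioo
  apply monotoneOn_of_deriv_nonneg (convex_Ioo _ _)
  · intro x hx
    exact ((hderiv x hx).continuousAt).continuousWithinAt
  · rw [hint]
    exact fun x hx => (hderiv x hx).differentiableAt.differentiableWithinAt
  · rw [hint]
    intro x hx
    rw [(hderiv x hx).deriv]
    have hc := cos_pos_of_mem x hx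
    have hs : 0 ≤ Real.sin x :=
      Real.sin_nonneg_of_nonneg_of_le_pi (le_of_lt hx.1) (by linarith [hx.2, Real.pi_pos])
    have hsx : Real.sin x ≤ x := le_of_lt (Real.sin_lt hx.1)
    have hcos1 : Real.cos x ≤ 1 := Real.cos_le_one x
    have hnum : 0 ≤ 1 / Real.cos x ^ 2 * x - Real.tan x * 1 := by
      rw [Real.tan_eq_sin_div_cos]
      have key : Real.sin x * Real.cos x ≤ x := by nlinarith
      have h2 : 0 < Real.cos x ^ 2 := by positivity
      rw [div_mul_eq_mul_div, mul_one, sub_nonneg, div_le_div_iff₀ hc h2]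
      nlinarith
    positivity
end
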